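/- Let G be a finite simple graph, let xy be an edge of G, and let t be a positive integer. Suppose 2·d(x) + d(y) ≤ 2t + 2, where d denotes degree in G. Then for any partition F₁, F₂, …, F_t of the edge set of G − xy into t linear forests (viewed as spanning subgraphs), there exists an index i ∈ {1, …, t} such that replacing F_i by F_i + xy yields a partition of the edge set of G into t linear forests; moreover, for every vertex v ≠ y, the set of indices j for which v has degree 2 in F_j is unchanged by this replacement. -/

import Mathlib

/-- A linear forest: a graph in which every connected component is a path,
equivalently every vertex has degree at most 2 and there are no cycles. -/
def IsLinearForest {V : Type*} (G : SimpleGraph V) : Prop :=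
  G.IsAcyclic ∧ ∀ v : V, (G.neighborSet v).ncard ≤ 2

/-- A partition of the edge set of `G` into `t` linear forests (viewed as
spanning subgraphs). -/
def IsLinearForestPartition {V : Type*} (G : SimpleGraph V) (t : ℕ)
    (F : Fin t → SimpleGraph V) : Prop :=
  (∀ i, IsLinearForest (F i)) ∧
  (Pairwise fun i j : Fin t => Disjoint (F i).edgeSet (F j).edgeSet) ∧
  (⋃ i, (F i).edgeSet) = G.edgeSet

/-- `G` is `k`-degenerate: every (nonempty) subgraph of `G` has a vertex of
degree at most `k`. -/
def KDegenerate {V : Type*} (G : SimpleGraph V) (k : ℕ) : Prop :=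
  ∀ H : G.Subgraph, H.verts.Nonempty → ∃ v ∈ H.verts, (H.neighborSet v).ncard ≤ k

/-- No cycle can pass through a vertex with a unique neighbor. -/
lemma aux_no_cycle_through {V : Type*} {H : SimpleGraph V} {x y : V} (hne : x ≠ y)
    (hnbr : ∀ z, H.Adj x z → z = y) (c : H.Walk x x) (hc : c.IsCycle) : False := by
  have hnn : ¬ c.Nil := hc.not_nil
  have h1 : H.Adj x (c.getVert 1) := c.adj_snd hnn
  have e1 : c.getVert 1 = y := hnbr _ h1
  set q : H.Walk (c.getVert 1) x := c.tail with hq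
  have hdecomp : SimpleGraph.Walk.cons (c.adj_snd hnn) q = c := c.cons_tail_eq hnn
  have hqnn : ¬ q.Nil := SimpleGraph.Walk.not_nil_of_ne (by rw [e1]; exact hne.symm)
  have hrnn : ¬ q.reverse.Nil := SimpleGraph.Walk.not_nil_of_ne (by rw [e1]; exact hne)
  have h2 : H.Adj x (q.reverse.getVert 1) := q.reverse.adj_snd hrnn
  have e2 : q.reverse.getVert 1 = y := hnbr _ h2
  have hmem : s(x, q.reverse.getVert 1) ∈ q.reverse.edges := by
    have h3 := congrArg SimpleGraph.Walk.edges (q.reverse.cons_tail_eq hrnn)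
    rw [SimpleGraph.Walk.edges_cons] at h3
    rw [← h3]
    exact List.mem_cons_self
  have hmemq : s(x, y) ∈ q.edges := by
    rw [e2, SimpleGraph.Walk.edges_reverse, List.mem_reverse] at hmem
    exact hmem
  have htrail : (SimpleGraph.Walk.cons (c.adj_snd hnn) q).IsTrail := by
    rw [hdecomp]; exact hc.isCircuit.isTrail
  have hnodup := htrail.edges_nodup
  rw [SimpleGraph.Walk.edges_cons] at hnodup
  have hhead : s(x, c.getVert 1) ∉ q.edges := (List.nodup_cons.mp hnodup).1
  have e1' : s(x, c.getVert 1) = s(x, y) := by rw [e1]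
  exact hhead (by rw [e1']; exact hmemq)

/-- Cardinality of a disjoint union over `Fin n`. -/
lemma aux_ncard_iUnion {α : Type*} [Finite α] {n : ℕ} (s : Fin n → Set α)
    (h : Pairwise fun i j => Disjoint (s i) (s j)) :
    (⋃ i, s i).ncard = ∑ i, (s i).ncard := by
  classical
  have key : ∀ A : Finset (Fin n), (⋃ i ∈ A, s i).ncard = ∑ i ∈ A, (s i).ncard := by
    intro A
    induction A using Finset.induction with
    | empty => simp
    | @insert a A ha ih =>
      rw [Finset.sum_insert ha, ← ih]
      have heq : (⋃ i ∈ insert a A, s i) = s a ∪ ⋃ i ∈ A, s i := by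
        simp [Set.biUnion_insert]
      rw [heq, Set.ncard_union_eq]
      refine Set.disjoint_iUnion_right.mpr fun i => Set.disjoint_iUnion_right.mpr fun hi => ?_
      exact h (by rintro rfl; exact ha hi)
  simpa using key Finset.univ

/-- Brute-force edge addition lemma: if `xy ∈ E(G)` and `2·d(x) + d(y) ≤ 2t + 2`,
then for any partition of `E(G - xy)` into `t` linear forests `F₁ | … | F_t`
there is an index `i` such that adding `xy` to `F_i` gives a partition of `E(G)`
into `t` linear forests; moreover for every vertex `v ≠ y` the set of indices `j`
for which `v` has degree 2 in `F_j` is unchanged. -/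
theorem linear_forest_partition_add_edge
    {V : Type*} [Fintype V] [DecidableEq V] (G : SimpleGraph V) [DecidableRel G.Adj]
    (x y : V) (hxy : G.Adj x y) (t : ℕ) (ht : 1 ≤ t)
    (hdeg : 2 * G.degree x + G.degree y ≤ 2 * t + 2)
    (F : Fin t → SimpleGraph V)
    (hF : IsLinearForestPartition (G.deleteEdges {s(x, y)}) t F) :
    ∃ i : Fin t,
      IsLinearForestPartition G t
        (Function.update F i (F i ⊔ SimpleGraph.fromEdgeSet {s(x, y)})) ∧
      ∀ v : V, v ≠ y → ∀ j : Fin t,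
        (((Function.update F i (F i ⊔ SimpleGraph.fromEdgeSet {s(x, y)})) j).neighborSet v).ncard = 2
          ↔ ((F j).neighborSet v).ncard = 2 := by
  classical
  obtain ⟨hlf, hdisj, hun⟩ := hF
  have hne : x ≠ y := hxy.ne
  set G' := G.deleteEdges {s(x, y)} with hG'
  -- basic edge set facts
  have hG'edge : G'.edgeSet = G.edgeSet \ {s(x, y)} := SimpleGraph.edgeSet_deleteEdges _
  have hsub : ∀ j, (F j).edgeSet ⊆ G'.edgeSet := fun j => by rw [← hun]; exact Set.subset_iUnion (fun k => (F k).edgeSet) j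
  have hnotmem : ∀ j, s(x, y) ∉ (F j).edgeSet := by
    intro j h
    have := hsub j h
    rw [hG'edge] at this
    exact this.2 rfl
  -- neighbor set decomposition
  have hsplit : ∀ v : V, (⋃ i, (F i).neighborSet v) = G'.neighborSet v := by
    intro v
    ext z
    simp only [Set.mem_iUnion, SimpleGraph.mem_neighborSet]
    constructor
    · rintro ⟨i, hi⟩
      have : s(v, z) ∈ G'.edgeSet := hsub i hi
      exact this
    · intro h
      have : s(v, z) ∈ ⋃ i, (F i).edgeSet := by rw [hun]; exact h
      obtain ⟨s, ⟨i, rfl⟩, hi⟩ := this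
      exact ⟨i, hi⟩
  have hnbrdisj : ∀ v : V, Pairwise fun i j : Fin t =>
      Disjoint ((F i).neighborSet v) ((F j).neighborSet v) := by
    intro v i j hij
    rw [Set.disjoint_left]
    intro z hzi hzj
    exact Set.disjoint_left.mp (hdisj hij) (((F i).mem_edgeSet).mpr hzi)
      (((F j).mem_edgeSet).mpr hzj)
  have hsum : ∀ v : V, ∑ i, ((F i).neighborSet v).ncard = (G'.neighborSet v).ncard := by
    intro v
    rw [← aux_ncard_iUnion _ (hnbrdisj v), hsplit v]
  -- neighbor sets in G'
  have hG'x : G'.neighborSet x = G.neighborSet x \ {y} := by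
    ext z
    simp only [SimpleGraph.mem_neighborSet, hG', SimpleGraph.deleteEdges_adj,
      Set.mem_diff, Set.mem_singleton_iff]
    refine and_congr_right fun _ => not_congr ?_
    rw [Sym2.eq_iff]
    constructor
    · rintro (⟨-, rfl⟩ | ⟨rfl, rfl⟩)
      · rfl
      · rfl
    · rintro rfl
      left; exact ⟨rfl, rfl⟩
  have hG'y : G'.neighborSet y = G.neighborSet y \ {x} := by
    ext z
    simp only [SimpleGraph.mem_neighborSet, hG', SimpleGraph.deleteEdges_adj,
      Set.mem_diff, Set.mem_singleton_iff]
    refine and_congr_right fun _ => not_congr ?_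
    rw [Sym2.eq_iff]
    constructor
    · rintro (⟨rfl, -⟩ | ⟨-, rfl⟩)
      · exact absurd rfl hne
      · rfl
    · rintro rfl
      right; exact ⟨rfl, rfl⟩
  have hdegx : (G.neighborSet x).ncard = G.degree x := by
    rw [Set.ncard_eq_toFinset_card']
    simp [SimpleGraph.degree, SimpleGraph.neighborFinset]
  have hdegy : (G.neighborSet y).ncard = G.degree y := by
    rw [Set.ncard_eq_toFinset_card']
    simp [SimpleGraph.degree, SimpleGraph.neighborFinset]
  have hdx : (G'.neighborSet x).ncard + 1 = G.degree x := by
    rw [hG'x, ← hdegx]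
    exact Set.ncard_diff_singleton_add_one hxy
  have hdy : (G'.neighborSet y).ncard + 1 = G.degree y := by
    rw [hG'y, ← hdegy]
    exact Set.ncard_diff_singleton_add_one hxy.symm
  -- find a good index
  have hgood : ∃ i : Fin t, ((F i).neighborSet x).ncard = 0 ∧ ((F i).neighborSet y).ncard ≤ 1 := by
    by_contra hcon
    push_neg at hcon
    have hbound : ∀ i : Fin t,
        2 ≤ 2 * ((F i).neighborSet x).ncard + ((F i).neighborSet y).ncard := by
      intro i
      rcases Nat.eq_zero_or_pos ((F i).neighborSet x).ncard with h0 | h0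
      · have := hcon i h0
        omega
      · omega
    have hs := Finset.sum_le_sum (fun i (_ : i ∈ Finset.univ) => hbound i)
    rw [Finset.sum_add_distrib, ← Finset.mul_sum, hsum, hsum] at hs
    simp only [Finset.sum_const, Finset.card_univ, Fintype.card_fin, smul_eq_mul, mul_comm] at hs
    omega
  obtain ⟨i, hdx0, hdy1⟩ := hgood
  set K := SimpleGraph.fromEdgeSet {s(x, y)} with hK
  set H := F i ⊔ K with hH
  have hKadj : ∀ u v : V, K.Adj u v ↔ (u = x ∧ v = y) ∨ (u = y ∧ v = x) := by
    intro u v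
    rw [hK, SimpleGraph.fromEdgeSet_adj, Set.mem_singleton_iff, Sym2.eq_iff]
    constructor
    · rintro ⟨(⟨rfl, rfl⟩ | ⟨rfl, rfl⟩), -⟩
      · left; exact ⟨rfl, rfl⟩
      · right; exact ⟨rfl, rfl⟩
    · rintro (⟨rfl, rfl⟩ | ⟨rfl, rfl⟩)
      · exact ⟨Or.inl ⟨rfl, rfl⟩, hne⟩
      · exact ⟨Or.inr ⟨rfl, rfl⟩, hne.symm⟩
  have hFxempty : (F i).neighborSet x = ∅ := (Set.ncard_eq_zero (Set.toFinite _)).mp hdx0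
  have hFadjx : ∀ z : V, ¬ (F i).Adj x z := by
    intro z hz
    have hz' : z ∈ (F i).neighborSet x := hz
    rw [hFxempty] at hz'
    exact hz'
  have hHnbrx : H.neighborSet x = {y} := by
    ext z
    rw [SimpleGraph.mem_neighborSet, Set.mem_singleton_iff, hH, SimpleGraph.sup_adj, hKadj]
    constructor
    · rintro (hz | (⟨-, rfl⟩ | ⟨hxx, -⟩))
      · exact absurd hz (hFadjx z)
      · rfl
      · exact absurd hxx hne
    · rintro rfl
      exact Or.inr (Or.inl ⟨rfl, rfl⟩)
  have hHnbry : H.neighborSet y = insert x ((F i).neighborSet y) := by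
    ext z
    rw [SimpleGraph.mem_neighborSet, Set.mem_insert_iff, hH, SimpleGraph.sup_adj, hKadj,
      SimpleGraph.mem_neighborSet]
    constructor
    · rintro (hz | (⟨hyx, -⟩ | ⟨-, rfl⟩))
      · exact Or.inr hz
      · exact absurd hyx hne.symm
      · exact Or.inl rfl
    · rintro (rfl | hz)
      · exact Or.inr (Or.inr ⟨rfl, rfl⟩)
      · exact Or.inl hz
  have hHnbrother : ∀ v : V, v ≠ x → v ≠ y → H.neighborSet v = (F i).neighborSet v := by
    intro v hvx hvy
    ext z
    rw [SimpleGraph.mem_neighborSet, SimpleGraph.mem_neighborSet, hH, SimpleGraph.sup_adj, hKadj]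
    constructor
    · rintro (hz | (⟨rfl, -⟩ | ⟨rfl, -⟩))
      · exact hz
      · exact absurd rfl hvx
      · exact absurd rfl hvy
    · exact fun hz => Or.inl hz
  have hHedge : H.edgeSet = (F i).edgeSet ∪ {s(x, y)} := by
    rw [hH, SimpleGraph.edgeSet_sup, hK, SimpleGraph.edgeSet_fromEdgeSet]
    congr 1
    ext e
    simp only [Set.mem_diff, Set.mem_singleton_iff, Set.mem_setOf_eq, and_iff_left_iff_imp]
    rintro rfl
    simpa using hne
  -- acyclicity of H
  have hHnbrxadj : ∀ z, H.Adj x z → z = y := by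
    intro z hz
    have : z ∈ H.neighborSet x := hz
    rwa [hHnbrx, Set.mem_singleton_iff] at this
  have hHacyclic : H.IsAcyclic := by
    intro u c hc
    by_cases hxyc : s(x, y) ∈ c.edges
    · have hxsup : x ∈ c.support := SimpleGraph.Walk.fst_mem_support_of_mem_edges c hxyc
      exact aux_no_cycle_through hne hHnbrxadj (c.rotate x hxsup) (hc.rotate hxsup)
    · have hmem : ∀ e ∈ c.edges, e ∈ (F i).edgeSet := by
        intro e he
        have h1 : e ∈ H.edgeSet := c.edges_subset_edgeSet he
        rw [hHedge] at h1
        rcases h1 with h1 | h1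
        · exact h1
        · rw [Set.mem_singleton_iff] at h1
          exact absurd (h1 ▸ he) hxyc
      exact (hlf i).1 (c.transfer (F i) hmem) (hc.transfer hmem)
  have hHlf : IsLinearForest H := by
    refine ⟨hHacyclic, fun v => ?_⟩
    by_cases hvx : v = x
    · subst hvx; rw [hHnbrx]; simp
    by_cases hvy : v = y
    · rw [hvy, hHnbry]
      calc (insert x ((F i).neighborSet y)).ncard ≤ ((F i).neighborSet y).ncard + 1 :=
            Set.ncard_insert_le _ _
        _ ≤ 2 := by omega
    · rw [hHnbrother v hvx hvy]; exact (hlf i).2 v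
  -- disjointness helper
  have hHdisj : ∀ k : Fin t, k ≠ i → Disjoint H.edgeSet (F k).edgeSet := by
    intro k hk
    rw [hHedge, Set.disjoint_union_left]
    exact ⟨hdisj (Ne.symm hk), Set.disjoint_singleton_left.mpr (hnotmem k)⟩
  refine ⟨i, ⟨?_, ?_, ?_⟩, ?_⟩
  · -- each part is a linear forest
    intro j
    by_cases hj : j = i
    · subst hj; rw [Function.update_self]; exact hHlf
    · rw [Function.update_of_ne hj]; exact hlf j
  · -- pairwise disjoint
    intro j k hjk
    by_cases hj : j = i
    · subst hj
      rw [Function.update_self, Function.update_of_ne (Ne.symm hjk)]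
      exact hHdisj k (Ne.symm hjk)
    · by_cases hk : k = i
      · subst hk
        rw [Function.update_self, Function.update_of_ne hj]
        exact (hHdisj j hj).symm
      · rw [Function.update_of_ne hj, Function.update_of_ne hk]
        exact hdisj hjk
  · -- union is the edge set of G
    ext e
    simp only [Set.mem_iUnion]
    constructor
    · rintro ⟨j, hj⟩
      by_cases hji : j = i
      · rw [hji, Function.update_self, hHedge] at hj
        rcases hj with hj | hj
        · exact ((hG'edge ▸ hsub i hj).1)
        · rw [Set.mem_singleton_iff] at hj
          rw [hj]
          exact G.mem_edgeSet.mpr hxy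
      · rw [Function.update_of_ne hji] at hj
        exact (hG'edge ▸ hsub j hj).1
    · intro he
      by_cases he' : e = s(x, y)
      · refine ⟨i, ?_⟩
        rw [Function.update_self, hHedge]
        right; exact he'
      · have : e ∈ G'.edgeSet := by rw [hG'edge]; exact ⟨he, he'⟩
        rw [← hun] at this
        obtain ⟨s, ⟨j, rfl⟩, hj⟩ := this
        refine ⟨j, ?_⟩
        by_cases hji : j = i
        · subst hji
          rw [Function.update_self, hHedge]
          left; exact hj
        · rw [Function.update_of_ne hji]; exact hj
  · -- degree-2 sets are unchanged away from y
    intro v hvy j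
    by_cases hji : j = i
    · subst hji
      rw [Function.update_self]
      by_cases hvx : v = x
      · subst hvx
        rw [hHnbrx, hFxempty]
        simp
      · rw [hHnbrother v hvx hvy]
    · rw [Function.update_of_ne hji]
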